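/- Every strong homomorphism ψ from C_5' to the Clebsch graph L equals σ ∘ φ for some automorphism σ of L, where φ maps the isolated vertex x_0 to 00000 and maps x_1,...,x_5 to the cyclic shifts 00011, 01100, 10001, 00110, 11000 (in the order giving a 5-cycle image). -/

import Mathlib

/-- Vertices of the Clebsch graph: binary 5-sequences with an even number of ones. -/
abbrev ClebschVert : Type := {v : Fin 5 → ZMod 2 // ∑ i, v i = 0}

/-- The Clebsch graph: two vertices are adjacent iff their termwise mod-2 sum has weight 4,
i.e. they differ in exactly four coordinates. -/
def Clebsch : SimpleGraph ClebschVert where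
  Adj x y := hammingDist x.1 y.1 = 4
  symm := ⟨fun x y h => by simpa [hammingDist_comm] using h⟩
  loopless := ⟨fun x h => by simp [hammingDist_self] at h⟩

instance : DecidableRel Clebsch.Adj := fun _ _ => Nat.decEq _ _

/-- A concrete vertex of the Clebsch graph. -/
def cv (a b c d e : ZMod 2) (h : a + b + c + d + e = 0 := by decide) : ClebschVert :=
  ⟨![a, b, c, d, e], by simp [Fin.sum_univ_five]; linear_combination h⟩

/-- C₅′: the 5-cycle on vertices 1,…,5 together with the isolated vertex 0. -/
def C5' : SimpleGraph (Fin 6) :=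
  SimpleGraph.fromRel fun i j =>
    (i.val, j.val) ∈ [(1, 2), (2, 3), (3, 4), (4, 5), (5, 1)]

/-- The standard strong homomorphism φ : C₅′ → Clebsch graph, sending the isolated vertex
to 00000 and the cycle vertices to the cyclic shifts of 00011 in a 5-cycle order. -/
def phi : Fin 6 → ClebschVert :=
  ![cv 0 0 0 0 0, cv 0 0 0 1 1, cv 0 1 1 0 0, cv 1 0 0 0 1, cv 0 0 1 1 0, cv 1 1 0 0 0]

/-! ### Auxiliary definitions and lemmas -/

/-- The zero vertex. -/
def z0 : ClebschVert := cv 0 0 0 0 0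

lemma z0_apply (j : Fin 5) : z0.1 j = 0 := by fin_cases j <;> rfl

instance : DecidableRel C5'.Adj := fun i j =>
  decidable_of_iff (i ≠ j ∧
    ((i.val, j.val) ∈ [(1, 2), (2, 3), (3, 4), (4, 5), (5, 1)] ∨
     (j.val, i.val) ∈ [(1, 2), (2, 3), (3, 4), (4, 5), (5, 1)])) Iff.rfl

lemma hd_comp (x y : Fin 5 → ZMod 2) (p : Equiv.Perm (Fin 5)) :
    hammingDist (x ∘ p) (y ∘ p) = hammingDist x y := by
  simp only [hammingDist]
  exact Finset.card_equiv p (by simp)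

lemma hd_add (x y t : Fin 5 → ZMod 2) :
    hammingDist (x + t) (y + t) = hammingDist x y := by
  simp [hammingDist, Pi.add_apply]

/-- Relabelling coordinates by a permutation. -/
def permMap (p : Equiv.Perm (Fin 5)) (v : ClebschVert) : ClebschVert :=
  ⟨v.1 ∘ p, by simpa using (Equiv.sum_comp p v.1).trans v.2⟩

/-- Translation by a fixed vertex. -/
def addMap (t : ClebschVert) (v : ClebschVert) : ClebschVert :=
  ⟨v.1 + t.1, by simp [Finset.sum_add_distrib, v.2, t.2]⟩

lemma addMap_invol (t v : ClebschVert) : addMap t (addMap t v) = v := by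
  apply Subtype.ext
  funext i
  simp [addMap, add_assoc, CharTwo.add_self_eq_zero]

/-- Coordinate permutations are automorphisms of the Clebsch graph. -/
def permIso (p : Equiv.Perm (Fin 5)) : Clebsch ≃g Clebsch where
  toFun := permMap p
  invFun := permMap p.symm
  left_inv v := by apply Subtype.ext; funext i; simp [permMap]
  right_inv v := by apply Subtype.ext; funext i; simp [permMap]
  map_rel_iff' := by
    intro a b
    show hammingDist (a.1 ∘ p) (b.1 ∘ p) = 4 ↔ hammingDist a.1 b.1 = 4
    rw [hd_comp]

/-- Translations are automorphisms of the Clebsch graph. -/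
def addIso (t : ClebschVert) : Clebsch ≃g Clebsch where
  toFun := addMap t
  invFun := addMap t
  left_inv v := addMap_invol t v
  right_inv v := addMap_invol t v
  map_rel_iff' := by
    intro a b
    show hammingDist (a.1 + t.1) (b.1 + t.1) = 4 ↔ hammingDist a.1 b.1 = 4
    rw [hd_add]

lemma permMap_z0 (p : Equiv.Perm (Fin 5)) : permMap p z0 = z0 := by
  apply Subtype.ext
  funext i
  show z0.1 (p i) = z0.1 i
  rw [z0_apply, z0_apply]

set_option maxRecDepth 100000 in
set_option synthInstance.maxSize 2000 in
set_option synthInstance.maxHeartbeats 1000000 in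
set_option maxHeartbeats 10000000 in
/-- The combinatorial core: any strong embedding of C₅′ with the isolated vertex at 0
is a coordinate permutation of φ. Verified by (pruned) exhaustive search. -/
lemma core : ∀ v1 : ClebschVert, ¬ Clebsch.Adj z0 v1 →
    ∀ v2 : ClebschVert, Clebsch.Adj v1 v2 → ¬ Clebsch.Adj z0 v2 →
    ∀ v3 : ClebschVert, Clebsch.Adj v2 v3 → ¬ Clebsch.Adj z0 v3 → ¬ Clebsch.Adj v1 v3 →
    ∀ v4 : ClebschVert, Clebsch.Adj v3 v4 → ¬ Clebsch.Adj z0 v4 → ¬ Clebsch.Adj v1 v4 →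
      ¬ Clebsch.Adj v2 v4 →
    ∀ v5 : ClebschVert, Clebsch.Adj v4 v5 → Clebsch.Adj v5 v1 → ¬ Clebsch.Adj z0 v5 →
      ¬ Clebsch.Adj v2 v5 → ¬ Clebsch.Adj v3 v5 →
    ∃ p : Equiv.Perm (Fin 5), v1 = permMap p (phi 1) ∧ v2 = permMap p (phi 2) ∧
      v3 = permMap p (phi 3) ∧ v4 = permMap p (phi 4) ∧ v5 = permMap p (phi 5) := by
  decide

/-- Every strong homomorphism from C₅′ to the Clebsch graph equals σ ∘ φ
for some automorphism σ of the Clebsch graph. -/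
theorem strongHom_C5'_eq_aut_comp_phi (ψ : Fin 6 → ClebschVert)
    (hψ : ∀ x y : Fin 6, C5'.Adj x y ↔ Clebsch.Adj (ψ x) (ψ y)) :
    ∃ σ : Clebsch ≃g Clebsch, ∀ i, ψ i = σ (phi i) := by
  set t := ψ 0 with ht
  set w : Fin 6 → ClebschVert := fun i => addMap t (ψ i) with hw
  have hC : ∀ i j : Fin 6, Clebsch.Adj (w i) (w j) ↔ C5'.Adj i j := by
    intro i j
    rw [hψ i j]
    show hammingDist ((ψ i).1 + t.1) ((ψ j).1 + t.1) = 4 ↔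
      hammingDist (ψ i).1 (ψ j).1 = 4
    rw [hd_add]
  have hw0 : w 0 = z0 := by
    apply Subtype.ext
    funext i
    show (ψ 0).1 i + (ψ 0).1 i = z0.1 i
    rw [z0_apply, CharTwo.add_self_eq_zero]
  obtain ⟨p, e1, e2, e3, e4, e5⟩ :=
    core (w 1) (by rw [← hw0, hC]; decide)
      (w 2) (by rw [hC]; decide) (by rw [← hw0, hC]; decide)
      (w 3) (by rw [hC]; decide) (by rw [← hw0, hC]; decide) (by rw [hC]; decide)
      (w 4) (by rw [hC]; decide) (by rw [← hw0, hC]; decide) (by rw [hC]; decide)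
        (by rw [hC]; decide)
      (w 5) (by rw [hC]; decide) (by rw [hC]; decide) (by rw [← hw0, hC]; decide)
        (by rw [hC]; decide) (by rw [hC]; decide)
  refine ⟨(permIso p).trans (addIso t), ?_⟩
  intro i
  have key : ∀ j : Fin 6, w j = permMap p (phi j) → ψ j = addMap t (permMap p (phi j)) := by
    intro j h
    rw [← h]
    exact (addMap_invol t (ψ j)).symm
  fin_cases i
  · show ψ 0 = addMap t (permMap p (phi 0))
    have : phi 0 = z0 := rfl
    rw [this, permMap_z0]
    apply Subtype.ext
    funext i
    show (ψ 0).1 i = z0.1 i + (ψ 0).1 i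
    rw [z0_apply, zero_add]
  · exact key 1 e1
  · exact key 2 e2
  · exact key 3 e3
  · exact key 4 e4
  · exact key 5 e5
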